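/- Let (X_α)_{α ∈ A} be a family of topological spaces such that every point x of each X_α has a neighbourhood basis consisting of closed, quasi-compact neighbourhoods of x. Let Y be a topological space such that every point y of Y has a neighbourhood basis consisting of closed neighbourhoods of y. Endow X := ∏_{α ∈ A} X_α with the product topology, and let f : X → Y be a map such that the restriction f|_K is continuous for every quasi-compact subset K ⊆ X. Then f is continuous. -/
import Mathlib

open Filter Set Topology

private lemma key_limit {A : Type*} {X : A → Type*} [∀ α, TopologicalSpace (X α)]
    {Y : Type*} [TopologicalSpace Y]
    (f : (∀ α, X α) → Y)
    (hf : ∀ K : Set (∀ α, X α), IsCompact K → ContinuousOn f K)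
    {ι : Type*} (l : Filter ι) [l.NeBot] (g : ι → ∀ α, X α) (q : ∀ α, X α)
    (S : ∀ α, Set (X α)) (hScpt : ∀ α, IsCompact (S α))
    (hgS : ∀ i α, g i α ∈ S α) (hqS : ∀ α, q α ∈ S α)
    (hg : Tendsto g l (𝓝 q)) (C : Set Y) (hC : IsClosed C) (hgC : ∀ i, f (g i) ∈ C) :
    f q ∈ C := by
  have hQ : IsCompact (Set.pi univ S) := isCompact_univ_pi hScpt
  have hcw : ContinuousWithinAt f (Set.pi univ S) q := hf _ hQ q (fun α _ => hqS α)
  have hgt : Tendsto g l (𝓝[Set.pi univ S] q) :=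
    tendsto_nhdsWithin_iff.2 ⟨hg, Eventually.of_forall fun i α _ => hgS i α⟩
  exact hC.mem_of_tendsto (Filter.Tendsto.comp hcw hgt) (Eventually.of_forall hgC)

theorem product_of_locally_quasicompact_is_kR
    {A : Type*} {X : A → Type*} [∀ α, TopologicalSpace (X α)]
    {Y : Type*} [TopologicalSpace Y]
    (hX : ∀ (α : A) (x : X α), ∀ U ∈ nhds x,
      ∃ K ∈ nhds x, K ⊆ U ∧ IsClosed K ∧ IsCompact K)
    (hY : ∀ (y : Y), ∀ U ∈ nhds y, ∃ C ∈ nhds y, C ⊆ U ∧ IsClosed C)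
    (f : (∀ α, X α) → Y)
    (hf : ∀ K : Set (∀ α, X α), IsCompact K → ContinuousOn f K) :
    Continuous f := by
  classical
  rw [continuous_iff_continuousAt]
  intro x
  rw [continuousAt_def]
  intro V hV
  obtain ⟨C, hCn, hCV, hCcl⟩ := hY (f x) V hV
  obtain ⟨C', hC'n, hC'sub, hC'cl⟩ := hY (f x) (interior C) (interior_mem_nhds.2 hCn)
  choose K hKn hKspec using fun α => hX α (x α) univ univ_mem
  have hKcl : ∀ α, IsClosed (K α) := fun α => (hKspec α).2.1
  have hKcpt : ∀ α, IsCompact (K α) := fun α => (hKspec α).2.2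
  -- slice continuity witnesses
  have SL : ∀ R : Finset A, ∃ M : ∀ α, Set (X α),
      (∀ α, M α ∈ 𝓝 (x α)) ∧ (∀ α, IsClosed (M α)) ∧
      ∀ r : ∀ α, X α, (∀ α, α ∉ R → r α = x α) → (∀ α ∈ R, r α ∈ M α) →
        f r ∈ interior C' := by
    intro R
    set N : Set (∀ α, X α) :=
      Set.pi univ (fun α => if α ∈ R then K α else ({x α} : Set (X α))) with hN
    have hNc : IsCompact N := isCompact_univ_pi fun α => by
      split_ifs
      · exact hKcpt α
      · exact isCompact_singleton
    have hxN : x ∈ N := by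
      intro α _
      show x α ∈ if α ∈ R then K α else ({x α} : Set (X α))
      split_ifs with h
      · exact mem_of_mem_nhds (hKn α)
      · exact Set.mem_singleton _
    have hcw : ContinuousWithinAt f N x := hf _ hNc x hxN
    have hpre : f ⁻¹' interior C' ∈ 𝓝[N] x :=
      Filter.tendsto_def.1 hcw _ (interior_mem_nhds.2 hC'n)
    rw [mem_nhdsWithin] at hpre
    obtain ⟨O, hOo, hxO, hOsub⟩ := hpre
    obtain ⟨I, u, hu, husub⟩ := isOpen_pi_iff.1 hOo x hxO
    have hGn : ∀ α, ((if α ∈ I then u α else univ) ∩ interior (K α)) ∈ 𝓝 (x α) := by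
      intro α
      refine IsOpen.mem_nhds (IsOpen.inter ?_ isOpen_interior)
        ⟨?_, mem_interior_iff_mem_nhds.2 (hKn α)⟩
      · split_ifs with h
        · exact (hu α h).1
        · exact isOpen_univ
      · split_ifs with h
        · exact (hu α h).2
        · trivial
    choose M1 hM1n hM1spec using fun α => hX α (x α) _ (hGn α)
    refine ⟨M1, hM1n, fun α => (hM1spec α).2.1, ?_⟩
    intro r hr1 hr2
    have hrO : r ∈ O := by
      apply husub
      rw [Set.mem_pi]
      intro α hαI
      rw [Finset.mem_coe] at hαI
      by_cases hαR : α ∈ R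
      · have h1 := (hM1spec α).1 (hr2 α hαR)
        have h2 := h1.1
        rwa [if_pos hαI] at h2
      · rw [hr1 α hαR]
        exact (hu α hαI).2
    have hrN : r ∈ N := by
      intro α _
      show r α ∈ if α ∈ R then K α else ({x α} : Set (X α))
      split_ifs with h
      · exact interior_subset ((hM1spec α).1 (hr2 α h)).2
      · rw [hr1 α h]
        exact Set.mem_singleton _
    exact hOsub ⟨hrO, hrN⟩
  choose M hMn hMcl hMsl using SL
  -- main claim : a basic neighbourhood controlling finitely-supported points
  suffices hU : ∃ (H : Finset A) (W : ∀ α, Set (X α)), (∀ α, W α ∈ 𝓝 (x α)) ∧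
      ∀ q : ∀ α, X α, (∀ α ∈ H, q α ∈ W α) → {α | q α ≠ x α}.Finite → f q ∈ C by
    obtain ⟨H, W, hWn, hWC⟩ := hU
    have hbox : (↑H : Set A).pi W ∈ 𝓝 x := set_pi_mem_nhds H.finite_toSet fun α _ => hWn α
    refine mem_of_superset hbox ?_
    intro q hq
    rw [Set.mem_pi] at hq
    have htr : ∀ F : Finset A, f (fun α => if α ∈ F then q α else x α) ∈ C := by
      intro F
      refine hWC _ (fun α hα => ?_) (Set.Finite.subset F.finite_toSet fun α hα => ?_)
      · by_cases h : α ∈ F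
        · simpa [h] using hq α (Finset.mem_coe.2 hα)
        · simpa [h] using mem_of_mem_nhds (hWn α)
      · simp only [Set.mem_setOf_eq] at hα
        by_contra hc
        rw [Finset.mem_coe] at hc
        exact hα (if_neg hc)
    have hfqC : f q ∈ C := by
      refine key_limit f hf atTop (fun F α => if α ∈ F then q α else x α) q
        (fun α => {q α, x α}) (fun α => ((Set.finite_singleton _).insert _).isCompact)
        (fun F α => by by_cases h : α ∈ F <;> simp [h]) (fun α => by simp)
        ?_ C hCcl htr
      refine tendsto_pi_nhds.2 fun α => ?_
      refine Tendsto.congr' ?_ tendsto_const_nhds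
      filter_upwards [eventually_ge_atTop ({α} : Finset A)] with F hF
      exact (if_pos (hF (Finset.mem_singleton_self α))).symm
    exact hCV hfqC
  -- suppose not : pick escaping finitely-supported points in every basic nbhd
  by_contra hcon
  push_neg at hcon
  choose q0 hq0box hq0fin hq0C using hcon
  set Wf : Finset A → ∀ α, Set (X α) := fun T α =>
    interior (K α) ∩ ⋂ R ∈ T.powerset, if α ∈ R then interior (M R α) else univ with hWfdef
  have hWfn : ∀ T α, Wf T α ∈ 𝓝 (x α) := by
    intro T α
    have hop : IsOpen (Wf T α) := by
      refine IsOpen.inter isOpen_interior (isOpen_biInter_finset fun R _ => ?_)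
      split_ifs
      · exact isOpen_interior
      · exact isOpen_univ
    refine hop.mem_nhds ⟨mem_interior_iff_mem_nhds.2 (hKn α), ?_⟩
    simp only [Set.mem_iInter]
    intro R hR
    split_ifs
    · exact mem_interior_iff_mem_nhds.2 (hMn R α)
    · trivial
  set step : Finset A → Finset A := fun T =>
    T ∪ (hq0fin T (Wf T) (hWfn T)).toFinset with hstepdef
  set S : ℕ → Finset A := fun n => step^[n] ∅ with hSdef
  have hSsucc : ∀ n, S (n + 1) = step (S n) := fun n => Function.iterate_succ_apply' step n ∅
  have hSmono : Monotone S := monotone_nat_of_le_succ fun n => by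
    rw [hSsucc]
    exact Finset.le_iff_subset.2 Finset.subset_union_left
  set q : ℕ → ∀ α, X α := fun n => q0 (S n) (Wf (S n)) (hWfn (S n)) with hqdef
  have hqbox : ∀ n, ∀ α ∈ S n, q n α ∈ Wf (S n) α := fun n => hq0box (S n) _ _
  have hqsupp : ∀ n α, q n α ≠ x α → α ∈ S (n + 1) := by
    intro n α h
    rw [hSsucc]
    refine Finset.mem_union_right _ ?_
    rw [Set.Finite.mem_toFinset]
    exact h
  have hqC : ∀ n, f (q n) ∉ C := fun n => hq0C (S n) _ _
  -- the enveloping compact sets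
  set E : ∀ α, Set (X α) := fun α => {v | ∃ n, α ∉ S n ∧ α ∈ S (n + 1) ∧ v = q n α} with hEdef
  have hEfin : ∀ α, (E α).Finite := by
    intro α
    have hsub : E α ⊆ (fun n => q n α) '' {n | α ∉ S n ∧ α ∈ S (n + 1)} := by
      rintro v ⟨n, h1, h2, rfl⟩
      exact ⟨n, ⟨h1, h2⟩, rfl⟩
    refine Set.Finite.subset (Set.Finite.image _ ?_) hsub
    refine Set.Subsingleton.finite ?_
    rintro i ⟨hi1, hi2⟩ j ⟨hj1, hj2⟩
    by_contra hij
    rcases Nat.lt_or_ge i j with h | h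
    · exact hj1 (hSmono (Nat.succ_le_of_lt h) hi2)
    · have hji : j < i := lt_of_le_of_ne h (Ne.symm hij)
      exact hi1 (hSmono (Nat.succ_le_of_lt hji) hj2)
  set K2 : ∀ α, Set (X α) := fun α => K α ∪ ({x α} ∪ E α) with hK2def
  have hK2cpt : ∀ α, IsCompact (K2 α) :=
    fun α => (hKcpt α).union (((Set.finite_singleton _).union (hEfin α)).isCompact)
  have hqK2 : ∀ n α, q n α ∈ K2 α := by
    intro n α
    by_cases hα : α ∈ S n
    · exact Or.inl (interior_subset (hqbox n α hα).1)
    · by_cases hx : q n α = x α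
      · exact Or.inr (Or.inl (by rw [hx]; exact Set.mem_singleton _))
      · exact Or.inr (Or.inr ⟨n, hα, hqsupp n α hx, rfl⟩)
  have hzK2x : ∀ α, x α ∈ K2 α := fun α => Or.inr (Or.inl (Set.mem_singleton _))
  -- diagonal ultrafilter limit
  set 𝒲 : Ultrafilter ℕ := Ultrafilter.of cofinite with h𝒲def
  have h𝒲le : (𝒲 : Filter ℕ) ≤ atTop := by
    rw [← Nat.cofinite_eq_atTop]
    exact Ultrafilter.of_le _
  have hz : ∀ α, ∃ zα ∈ K2 α, Tendsto (fun n => q n α) (𝒲 : Filter ℕ) (𝓝 zα) := by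
    intro α
    obtain ⟨zα, hzmem, hzle⟩ := (hK2cpt α).ultrafilter_le_nhds
      (Ultrafilter.map (fun n => q n α) 𝒲)
      (by rw [Ultrafilter.coe_map]
          exact le_principal_iff.2 (mem_map.2 (univ_mem' fun n => hqK2 n α)))
    refine ⟨zα, hzmem, ?_⟩
    rwa [Ultrafilter.coe_map] at hzle
  choose z hzK2 hzt using hz
  have hqt : Tendsto q (𝒲 : Filter ℕ) (𝓝 z) := tendsto_pi_nhds.2 hzt
  -- the limit point is not mapped into the interior of C
  have hfz1 : f z ∉ interior C := by
    have hcl : f z ∈ closure Cᶜ :=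
      key_limit f hf (𝒲 : Filter ℕ) q z K2 hK2cpt (fun n α => hqK2 n α) hzK2
        hqt (closure Cᶜ) isClosed_closure (fun n => subset_closure (hqC n))
    rw [closure_compl] at hcl
    exact hcl
  -- but its truncations are controlled by the slice witnesses
  have hzM : ∀ n, ∀ α ∈ S n, z α ∈ M (S n) α := by
    intro n α hα
    have hev : ∀ᶠ i in (𝒲 : Filter ℕ), q i α ∈ interior (M (S n) α) := by
      refine Filter.Eventually.filter_mono h𝒲le ?_
      refine eventually_atTop.2 ⟨n, fun i hi => ?_⟩
      have hαi : α ∈ S i := hSmono hi hα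
      have hsub : Wf (S i) α ⊆ interior (M (S n) α) := by
        intro y hy
        have h2 := hy.2
        simp only [Set.mem_iInter] at h2
        have h3 := h2 (S n) (Finset.mem_powerset.2 (hSmono hi))
        rwa [if_pos hα] at h3
      exact hsub (hqbox i α hαi)
    have hcl : z α ∈ closure (interior (M (S n) α)) := mem_closure_of_tendsto (hzt α) hev
    have hsub2 : closure (interior (M (S n) α)) ⊆ M (S n) α :=
      (closure_mono interior_subset).trans (hMcl (S n) α).closure_eq.subset
    exact hsub2 hcl
  set g : ℕ → ∀ α, X α := fun n α => if α ∈ S n then z α else x α with hgdef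
  have hgC' : ∀ n, f (g n) ∈ C' := by
    intro n
    refine interior_subset (hMsl (S n) (g n) (fun α hα => if_neg hα) (fun α hα => ?_))
    have : g n α = z α := if_pos hα
    rw [this]
    exact hzM n α hα
  have hgt : Tendsto g atTop (𝓝 z) := by
    refine tendsto_pi_nhds.2 fun α => ?_
    by_cases hα : ∃ n, α ∈ S n
    · obtain ⟨n, hn⟩ := hα
      refine Tendsto.congr' ?_ tendsto_const_nhds
      filter_upwards [eventually_ge_atTop n] with m hm
      exact (if_pos (hSmono hm hn)).symm
    · push_neg at hα
      have hqx : ∀ i, q i α = x α := by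
        intro i
        by_contra hc
        exact hα (i + 1) (hqsupp i α hc)
      refine Filter.tendsto_def.2 fun U hU => ?_
      have hm : (fun i => q i α) ⁻¹' U ∈ (𝒲 : Filter ℕ) := Filter.tendsto_def.1 (hzt α) U hU
      obtain ⟨i, hi⟩ := Filter.nonempty_of_mem hm
      have hx : x α ∈ U := by
        rw [Set.mem_preimage, hqx i] at hi
        exact hi
      refine univ_mem' fun m => ?_
      show g m α ∈ U
      have : g m α = x α := if_neg (hα m)
      rw [this]
      exact hx
  have hfzC' : f z ∈ C' :=
    key_limit f hf atTop g z (fun α => {z α, x α})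
      (fun α => ((Set.finite_singleton _).insert _).isCompact)
      (fun n α => by
        by_cases h : α ∈ S n
        · simp only [hgdef, if_pos h]
          exact Set.mem_insert _ _
        · simp only [hgdef, if_neg h]
          exact Set.mem_insert_iff.2 (Or.inr (Set.mem_singleton _)))
      (fun α => Set.mem_insert _ _)
      hgt C' hC'cl hgC'
  exact hfz1 (hC'sub hfzC')
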